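/- arXiv:1705.08318 — 2 statements merged into one kernel-verified Lean document; each statement's English description precedes it below -/
import Mathlib

section
/- A spiral deformation preserves isotropy: if X : ℝ² → ℝ is a stationary isotropic random field (its law is invariant under translations and rotations of the index set) and θ is a spiral deformation, then the deformed field X ∘ θ is isotropic, i.e. for every rotation ρ ∈ SO(2), the field t ↦ X(θ(ρ t)) has the same law as t ↦ X(θ(t)). -/
noncomputable section

open MeasureTheory

/-- Rotation of the plane by angle `α`. -/
def rot (α : ℝ) (p : ℝ × ℝ) : ℝ × ℝ :=
  (p.1 * Real.cos α - p.2 * Real.sin α, p.1 * Real.sin α + p.2 * Real.cos α)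

/-- A homeomorphism `θ` of `ℝ²` fixing `0` is a *spiral deformation* if in polar coordinates
it has the form `θ̂(r,φ) = (f r, g r + ε φ)`. -/
def IsSpiral (θ : (ℝ × ℝ) ≃ₜ (ℝ × ℝ)) : Prop :=
  θ 0 = 0 ∧
  ∃ (f : ℝ → ℝ) (g : ℝ → Real.Angle) (ε : ℤ),
    (ε = 1 ∨ ε = -1) ∧
    StrictMonoOn f (Set.Ioi 0) ∧
    (∀ r ∈ Set.Ioi (0 : ℝ), f r ∈ Set.Ioi (0 : ℝ)) ∧
    Set.Ioi (0 : ℝ) ⊆ f '' Set.Ioi 0 ∧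
    ∀ r : ℝ, 0 < r → ∀ φ : ℝ,
      θ (r * Real.cos φ, r * Real.sin φ) =
        (f r * Real.Angle.cos (g r + ε • (φ : Real.Angle)),
         f r * Real.Angle.sin (g r + ε • (φ : Real.Angle)))

lemma rot_eval (β : ℝ) (r φ : ℝ) :
    rot β (r * Real.cos φ, r * Real.sin φ) = (r * Real.cos (φ + β), r * Real.sin (φ + β)) := by
  simp only [rot, Real.cos_add, Real.sin_add, Prod.mk.injEq]
  constructor <;> ring

lemma measurable_comp_map (h : (ℝ × ℝ) → (ℝ × ℝ)) :
    Measurable (fun ω : (ℝ × ℝ) → ℝ => fun t => ω (h t)) :=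
  measurable_pi_lambda _ (fun t => measurable_pi_apply (h t))

/-- A spiral deformation preserves isotropy: if the law `μ` of a random field on `ℝ²`
(viewed as a probability measure on the function space `ℝ² → ℝ`) is invariant under all
translations and all rotations of the index set, and `θ` is a spiral deformation, then the
deformed field `X ∘ θ` is isotropic: for every rotation `ρ_α ∈ SO(2)` the field
`t ↦ X(θ(ρ_α t))` has the same law as `t ↦ X(θ t)`. -/
theorem spiral_preserves_isotropy
    (μ : Measure ((ℝ × ℝ) → ℝ)) [IsProbabilityMeasure μ]
    (hstat : ∀ v : ℝ × ℝ, Measure.map (fun ω => fun t => ω (t + v)) μ = μ)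
    (hiso : ∀ α : ℝ, Measure.map (fun ω => fun t => ω (rot α t)) μ = μ)
    (θ : (ℝ × ℝ) ≃ₜ (ℝ × ℝ)) (hθ : IsSpiral θ) :
    ∀ α : ℝ, Measure.map (fun ω => fun t => ω (θ (rot α t))) μ =
      Measure.map (fun ω => fun t => ω (θ t)) μ := by
  obtain ⟨h0, f, g, ε, hε, hmono, hpos, hsurj, hpolar⟩ := hθ
  intro α
  -- key: θ intertwines rot α with rot (ε * α)
  have key : ∀ t : ℝ × ℝ, θ (rot α t) = rot (ε * α) (θ t) := by
    intro t
    by_cases ht : t = 0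
    · subst ht
      have h00 : ∀ β : ℝ, rot β (0 : ℝ × ℝ) = 0 := by
        intro β
        simp [rot, Prod.ext_iff]
      rw [h00, h0, h00]
    · set z : ℂ := ⟨t.1, t.2⟩ with hz
      have hzne : z ≠ 0 := by
        intro h
        apply ht
        have h1 : z.re = 0 := by rw [h]; simp
        have h2 : z.im = 0 := by rw [h]; simp
        exact Prod.ext h1 h2
      set r : ℝ := ‖z‖ with hr
      set φ : ℝ := z.arg with hφ
      have hrpos : 0 < r := by
        simpa [hr] using (norm_pos_iff.mpr hzne)
      have ht' : t = (r * Real.cos φ, r * Real.sin φ) := by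
        refine Prod.ext ?_ ?_
        · exact (Complex.norm_mul_cos_arg z).symm
        · exact (Complex.norm_mul_sin_arg z).symm
      have hsmul : ∀ ψ : ℝ, (ε • (ψ : Real.Angle)) = ((ε * ψ : ℝ) : Real.Angle) := by
        intro ψ
        rw [← Real.Angle.coe_zsmul]
        norm_num
      have hangle : ∀ ψ γ : ℝ, g r + ε • ((ψ + γ : ℝ) : Real.Angle)
          = (g r + ε • (ψ : Real.Angle)) + ((ε * γ : ℝ) : Real.Angle) := by
        intro ψ γ
        rw [hsmul, hsmul]
        rw [mul_add, Real.Angle.coe_add]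
        ring_nf
        abel
      have hcos : ∀ x : Real.Angle, ∀ y : ℝ,
          Real.Angle.cos (x + (y : Real.Angle)) =
            Real.Angle.cos x * Real.cos y - Real.Angle.sin x * Real.sin y := by
        intro x y
        induction x using Real.Angle.induction_on with
        | h x =>
          rw [← Real.Angle.coe_add, Real.Angle.cos_coe, Real.Angle.cos_coe,
            Real.Angle.sin_coe, Real.cos_add]
      have hsin : ∀ x : Real.Angle, ∀ y : ℝ,
          Real.Angle.sin (x + (y : Real.Angle)) =
            Real.Angle.sin x * Real.cos y + Real.Angle.cos x * Real.sin y := by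
        intro x y
        induction x using Real.Angle.induction_on with
        | h x =>
          rw [← Real.Angle.coe_add, Real.Angle.sin_coe, Real.Angle.cos_coe,
            Real.Angle.sin_coe, Real.sin_add]
      rw [ht', rot_eval, hpolar r hrpos (φ + α), hpolar r hrpos φ,
        hangle φ α]
      rw [hcos, hsin]
      simp only [rot, Prod.mk.injEq]
      constructor <;> ring
  have hfun : (fun ω : (ℝ × ℝ) → ℝ => fun t => ω (θ (rot α t)))
      = (fun ω : (ℝ × ℝ) → ℝ => fun t => ω (θ t)) ∘
        (fun ω : (ℝ × ℝ) → ℝ => fun t => ω (rot (ε * α) t)) := by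
    funext ω
    funext t
    simp [key t]
  rw [hfun, ← Measure.map_map (measurable_comp_map θ) (measurable_comp_map (rot (ε * α))),
    hiso (ε * α)]
end
end

section
/- Suppose θ : ℝ² → ℝ² is a homeomorphism with θ(0)=0 satisfying ‖θ(ρ x) − θ(ρ y)‖ = ‖θ(x) − θ(y)‖ for all rotations ρ ∈ SO(2) and all x, y ∈ ℝ². Then the radial part of θ is a radial function: there exists f : (0,∞) → (0,∞), strictly increasing with limit 0 at 0 and limit +∞ at +∞, such that ‖θ(x)‖ = f(‖x‖) for all x ≠ 0. -/
open Set Filter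

noncomputable section

/-- The Euclidean norm on `ℝ²`. -/
noncomputable def enorm2 (p : ℝ × ℝ) : ℝ := Real.sqrt (p.1 ^ 2 + p.2 ^ 2)

lemma enorm2_nonneg (p : ℝ × ℝ) : 0 ≤ enorm2 p := Real.sqrt_nonneg _

lemma enorm2_continuous : Continuous enorm2 := by
  unfold enorm2; fun_prop

lemma enorm2_pos {p : ℝ × ℝ} (hp : p ≠ 0) : 0 < enorm2 p := by
  have h1 : ¬(p.1 = 0 ∧ p.2 = 0) := by
    intro ⟨a, b⟩; exact hp (Prod.ext a b)
  have : 0 < p.1 ^ 2 + p.2 ^ 2 := by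
    rcases not_and_or.mp h1 with h | h
    · have : 0 < p.1 ^ 2 := by positivity
      nlinarith [sq_nonneg p.2]
    · have : 0 < p.2 ^ 2 := by positivity
      nlinarith [sq_nonneg p.1]
  exact Real.sqrt_pos.mpr this

lemma enorm2_eq_zero {p : ℝ × ℝ} (h : enorm2 p = 0) : p = 0 := by
  by_contra hp
  exact absurd h (ne_of_gt (enorm2_pos hp))

lemma enorm2_rot (α : ℝ) (p : ℝ × ℝ) : enorm2 (rot α p) = enorm2 p := by
  unfold enorm2 rot
  congr 1
  ring_nf
  nlinarith [Real.sin_sq_add_cos_sq α]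

lemma enorm2_pair {r : ℝ} (hr : 0 ≤ r) : enorm2 (r, 0) = r := by
  simp [enorm2]
  rw [Real.sqrt_sq hr]

lemma exists_rot {p : ℝ × ℝ} (hp : p ≠ 0) : ∃ α, rot α (enorm2 p, 0) = p := by
  set z : ℂ := ⟨p.1, p.2⟩ with hz_def
  have hz : z ≠ 0 := by
    intro h
    apply hp
    have h1 : z.re = 0 := by rw [h]; simp
    have h2 : z.im = 0 := by rw [h]; simp
    exact Prod.ext h1 h2
  have habs : ‖z‖ = enorm2 p := by
    rw [Complex.norm_def, Complex.normSq_mk, enorm2]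
    ring_nf
  have hpos : (0:ℝ) < ‖z‖ := norm_pos_iff.mpr hz
  refine ⟨z.arg, ?_⟩
  have hcos := Complex.cos_arg hz
  have hsin := Complex.sin_arg z
  have h1 : enorm2 p * Real.cos z.arg = p.1 := by
    rw [← habs, hcos]; field_simp; rfl
  have h2 : enorm2 p * Real.sin z.arg = p.2 := by
    rw [← habs, hsin]; field_simp; rfl
  unfold rot
  ext <;> simp [h1, h2]

lemma enorm2_scale (a : ℝ) (p : ℝ × ℝ) :
    enorm2 (a * p.1, a * p.2) = |a| * enorm2 p := by
  unfold enorm2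
  have : (a * p.1) ^ 2 + (a * p.2) ^ 2 = a ^ 2 * (p.1 ^ 2 + p.2 ^ 2) := by ring
  rw [this, Real.sqrt_mul (sq_nonneg a), Real.sqrt_sq_eq_abs]

/-- If a homeomorphism `θ` of `ℝ²` with `θ 0 = 0` satisfies
`‖θ(ρx) − θ(ρy)‖ = ‖θ(x) − θ(y)‖` for all rotations `ρ ∈ SO(2)` and all `x, y`, then its
radial part is a radial function: there exists `f : (0,∞) → (0,∞)` strictly increasing,
with limit `0` at `0` and `+∞` at `+∞`, such that `‖θ(x)‖ = f(‖x‖)` for all `x ≠ 0`. -/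
theorem radial_part_is_radial (θ : (ℝ × ℝ) ≃ₜ (ℝ × ℝ)) (hθ0 : θ 0 = 0)
    (h : ∀ α : ℝ, ∀ x y : ℝ × ℝ,
      enorm2 (θ (rot α x) - θ (rot α y)) = enorm2 (θ x - θ y)) :
    ∃ f : ℝ → ℝ,
      StrictMonoOn f (Set.Ioi 0) ∧
      (∀ r ∈ Set.Ioi (0 : ℝ), 0 < f r) ∧
      Filter.Tendsto f (nhdsWithin 0 (Set.Ioi 0)) (nhds 0) ∧
      Filter.Tendsto f Filter.atTop Filter.atTop ∧
      ∀ x : ℝ × ℝ, x ≠ 0 → enorm2 (θ x) = f (enorm2 x) := by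
  set f : ℝ → ℝ := fun r => enorm2 (θ (r, 0)) with hf_def
  -- rotation invariance of x ↦ ‖θ x‖
  have hrot0 : ∀ α : ℝ, rot α 0 = 0 := by intro α; simp [rot]
  have hinv : ∀ (α : ℝ) (x : ℝ × ℝ), enorm2 (θ (rot α x)) = enorm2 (θ x) := by
    intro α x
    have := h α x 0
    rwa [hrot0, hθ0, sub_zero, sub_zero] at this
  -- the radial formula
  have hrad : ∀ x : ℝ × ℝ, x ≠ 0 → enorm2 (θ x) = f (enorm2 x) := by
    intro x hx
    obtain ⟨α, hα⟩ := exists_rot hx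
    calc enorm2 (θ x) = enorm2 (θ (rot α (enorm2 x, 0))) := by rw [hα]
    _ = enorm2 (θ (enorm2 x, 0)) := hinv α _
    _ = f (enorm2 x) := rfl
  -- positivity
  have hpos : ∀ r ∈ Set.Ioi (0:ℝ), 0 < f r := by
    intro r hr
    apply enorm2_pos
    intro hcontra
    have : (r, 0) = (0 : ℝ × ℝ) := by
      have := θ.injective (hcontra.trans hθ0.symm)
      exact this
    have : r = 0 := congrArg Prod.fst this
    exact absurd this (ne_of_gt hr)
  -- continuity of f
  have hcont : Continuous f := by
    apply enorm2_continuous.comp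
    exact θ.continuous.comp (continuous_id.prodMk continuous_const)
  -- surjectivity onto (0, ∞)
  have hsurj : ∀ c : ℝ, 0 < c → ∃ r > 0, f r = c := by
    intro c hc
    set x := θ.symm (c, 0) with hx_def
    have hθx : θ x = (c, 0) := θ.apply_symm_apply _
    have hx0 : x ≠ 0 := by
      intro hcontra
      rw [hcontra, hθ0] at hθx
      have : c = 0 := (congrArg Prod.fst hθx).symm
      exact absurd this (ne_of_gt hc)
    refine ⟨enorm2 x, enorm2_pos hx0, ?_⟩
    rw [← hrad x hx0, hθx, enorm2_pair hc.le]
  -- limit at 0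
  have hf0 : f 0 = 0 := by
    have : ((0:ℝ), (0:ℝ)) = (0 : ℝ × ℝ) := rfl
    simp only [hf_def, this, hθ0]
    simp [enorm2]
  have htend0 : Tendsto f (nhdsWithin 0 (Set.Ioi 0)) (nhds 0) := by
    have := hcont.tendsto 0
    rw [hf0] at this
    exact this.mono_left nhdsWithin_le_nhds
  -- injectivity on (0, ∞)
  have key : ∀ r s : ℝ, 0 < r → r < s → f r = f s → False := by
    intro r s hr hrs hfeq
    set c := f r with hc_def
    have hc : 0 < c := hpos r hr
    -- the circle of radius c is connected
    set circ : Set (ℝ × ℝ) := {y | enorm2 y = c} with hcirc_def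
    have hcirc_eq : circ = Set.range (fun α => rot α (c, 0)) := by
      ext y
      constructor
      · intro hy
        have hy0 : y ≠ 0 := by
          intro hcontra
          rw [hcontra] at hy
          have : enorm2 (0 : ℝ × ℝ) = 0 := by simp [enorm2]
          rw [Set.mem_setOf_eq, this] at hy
          exact absurd hy.symm (ne_of_gt hc)
        obtain ⟨α, hα⟩ := exists_rot hy0
        exact ⟨α, by rw [← hy]; exact hα⟩
      · rintro ⟨α, rfl⟩
        show enorm2 _ = c
        rw [enorm2_rot, enorm2_pair hc.le]
    have hconn_circ : IsConnected circ := by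
      rw [hcirc_eq]
      apply isConnected_range
      unfold rot
      fun_prop
    -- its preimage under θ is connected, hence its set of radii is an interval
    have hconnS : IsConnected (θ.symm '' circ) := hconn_circ.image _ θ.symm.continuous.continuousOn
    have hconnT : IsConnected (enorm2 '' (θ.symm '' circ)) :=
      hconnS.image _ enorm2_continuous.continuousOn
    have hmemr : r ∈ enorm2 '' (θ.symm '' circ) := by
      refine ⟨(r, 0), ⟨θ (r, 0), ?_, θ.symm_apply_apply _⟩, enorm2_pair hr.le⟩
      exact hc_def.symm
    have hmems : s ∈ enorm2 '' (θ.symm '' circ) := by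
      refine ⟨(s, 0), ⟨θ (s, 0), ?_, θ.symm_apply_apply _⟩, enorm2_pair (hr.trans hrs).le⟩
      show enorm2 (θ (s, 0)) = c
      exact hfeq.symm
    have hIcc : Set.Icc r s ⊆ enorm2 '' (θ.symm '' circ) :=
      hconnT.isPreconnected.Icc_subset hmemr hmems
    -- hence f is constant = c on [r, s]
    have hconst : ∀ t ∈ Set.Icc r s, f t = c := by
      intro t ht
      obtain ⟨x, ⟨y, hy, hyx⟩, hxt⟩ := hIcc ht
      have htpos : 0 < t := lt_of_lt_of_le hr ht.1
      have hx0 : x ≠ 0 := by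
        intro hcontra
        rw [hcontra] at hxt
        have : enorm2 (0 : ℝ × ℝ) = 0 := by simp [enorm2]
        rw [this] at hxt
        exact absurd hxt.symm (ne_of_gt htpos)
      have hθx : θ x = y := by rw [← hyx, θ.apply_symm_apply]
      have : enorm2 (θ x) = c := by rw [hθx]; exact hy
      rw [hrad x hx0, hxt] at this
      exact this
    -- the open annulus maps into the circle, contradicting openness
    set A : Set (ℝ × ℝ) := enorm2 ⁻¹' (Set.Ioo r s) with hA_def
    have hAopen : IsOpen A := (isOpen_Ioo).preimage enorm2_continuous
    have hUopen : IsOpen (θ '' A) := θ.isOpenMap _ hAopen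
    have hUsub : θ '' A ⊆ circ := by
      rintro _ ⟨x, hx, rfl⟩
      have hx1 : r < enorm2 x := hx.1
      have hx0 : x ≠ 0 := by
        intro hcontra
        rw [hcontra] at hx1
        have : enorm2 (0 : ℝ × ℝ) = 0 := by simp [enorm2]
        rw [this] at hx1
        exact absurd hx1 (not_lt.mpr hr.le)
      show enorm2 (θ x) = c
      rw [hrad x hx0]
      exact hconst _ ⟨hx.1.le, hx.2.le⟩
    -- a point of the image
    have hmid : ((r + s)/2, (0:ℝ)) ∈ A := by
      show enorm2 _ ∈ Set.Ioo r s
      rw [enorm2_pair (by linarith : (0:ℝ) ≤ (r+s)/2)]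
      constructor <;> [linarith; linarith]
    set p := θ ((r + s)/2, 0) with hp_def
    have hpU : p ∈ θ '' A := ⟨_, hmid, rfl⟩
    have hpc : enorm2 p = c := hUsub hpU
    -- scaling p slightly stays in the open set θ '' A but changes the norm
    have hm : Continuous (fun t : ℝ => ((1 + t) * p.1, (1 + t) * p.2)) := by fun_prop
    have h0mem : (0:ℝ) ∈ (fun t : ℝ => ((1 + t) * p.1, (1 + t) * p.2)) ⁻¹' (θ '' A) := by
      show ((1 + 0) * p.1, (1 + 0) * p.2) ∈ θ '' A
      simpa using hpU
    have hopen' : IsOpen ((fun t : ℝ => ((1 + t) * p.1, (1 + t) * p.2)) ⁻¹' (θ '' A)) :=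
      hUopen.preimage hm
    obtain ⟨ε, hε, hball⟩ := Metric.isOpen_iff.mp hopen' 0 h0mem
    have htmem : (ε/2 : ℝ) ∈ Metric.ball (0:ℝ) ε := by
      rw [Metric.mem_ball, Real.dist_eq, sub_zero, abs_of_pos (by linarith)]
      linarith
    have hin : ((1 + ε/2) * p.1, (1 + ε/2) * p.2) ∈ θ '' A := hball htmem
    have : enorm2 ((1 + ε/2) * p.1, (1 + ε/2) * p.2) = c := hUsub hin
    rw [enorm2_scale, hpc, abs_of_pos (by linarith : (0:ℝ) < 1 + ε/2)] at this
    nlinarith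
  have hinj : Set.InjOn f (Set.Ioi 0) := by
    intro a ha b hb hab
    rcases lt_trichotomy a b with hlt | heq | hgt
    · exact absurd hab (fun hh => key a b ha hlt hh)
    · exact heq
    · exact absurd hab.symm (fun hh => key b a hb hgt hh)
  -- strict monotonicity on (0, ∞)
  have hmono : StrictMonoOn f (Set.Ioi 0) := by
    intro a ha b hb hab
    simp only [Set.mem_Ioi] at ha hb
    -- choose c near 0 with f c < min (f a) (f b)
    have hmin : 0 < min (f a) (f b) := lt_min (hpos a ha) (hpos b hb)
    have : ∀ᶠ t in nhdsWithin 0 (Set.Ioi 0), f t < min (f a) (f b) := by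
      filter_upwards [htend0 (Iio_mem_nhds hmin)] with t ht using ht
    have : ∀ᶠ t in nhdsWithin 0 (Set.Ioi 0), f t < min (f a) (f b) ∧ t < a := by
      refine this.and ?_
      have : Set.Iio a ∈ nhdsWithin (0:ℝ) (Set.Ioi 0) :=
        nhdsWithin_le_nhds (Iio_mem_nhds ha)
      filter_upwards [this] with t ht using ht
    obtain ⟨c, hc⟩ := (this.and self_mem_nhdsWithin).exists
    obtain ⟨⟨hfc, hca⟩, hc0'⟩ := hc
    have hc0 : (0:ℝ) < c := hc0'
    -- f is strictly monotone on [c, b] since f c ≤ f b, continuous, injective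
    have hcb : c ≤ b := le_of_lt (hca.trans hab)
    have hsub : Set.Icc c b ⊆ Set.Ioi 0 := fun t ht => lt_of_lt_of_le hc0 ht.1
    have hmono' : StrictMonoOn f (Set.Icc c b) := by
      apply ContinuousOn.strictMonoOn_of_injOn_Icc hcb
      · exact le_of_lt (lt_of_lt_of_le hfc (min_le_right _ _))
      · exact hcont.continuousOn
      · exact hinj.mono hsub
    exact hmono' ⟨hca.le, hab.le⟩ ⟨hcb, le_refl b⟩ hab
  -- tends to infinity
  have htop : Tendsto f atTop atTop := by
    rw [tendsto_atTop]
    intro M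
    obtain ⟨r, hr, hfr⟩ := hsurj (max M 1) (lt_max_of_lt_right one_pos)
    filter_upwards [eventually_ge_atTop (r + 1)] with t ht
    have hrt : r < t := by linarith
    have : f r < f t := hmono (Set.mem_Ioi.mpr hr) (Set.mem_Ioi.mpr (hr.trans hrt)) hrt
    have := this.le
    rw [hfr] at this
    exact le_trans (le_max_left M 1) this
  exact ⟨f, hmono, hpos, htend0, htop, hrad⟩
end
end
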